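/- Let L ∈ ℝ^{n×n} be symmetric positive semidefinite with kernel exactly span{1}, let ε > 0 be such that ελ < 2 for every eigenvalue λ of L, and let c ∈ ℝⁿ. If z[0] ∈ ℝⁿ satisfies 1ᵀz[0] = 1, then the iterates z[k+1] = (I − εL)·z[k] + εL·c converge, as k → ∞, to z* = c + ((1 − 1ᵀc)/n)·1, which is the unique minimizer of (1/2)‖z − c‖² subject to 1ᵀz = 1. -/

import Mathlib

open Matrix Filter

/-- Let `L ∈ ℝ^{n×n}` be symmetric positive semidefinite with kernel exactly `span{1}`,
let `ε > 0` satisfy `ελ < 2` for every eigenvalue `λ` of `L`, and let `c ∈ ℝⁿ`. If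
`1ᵀz[0] = 1`, then the iterates `z[k+1] = (I − εL)z[k] + εLc` converge to
`z* = c + ((1 − 1ᵀc)/n)·1`, the unique minimizer of `(1/2)‖z − c‖²` subject to `1ᵀz = 1`. -/
theorem projected_gradient_converges (n : ℕ) (L : Matrix (Fin n) (Fin n) ℝ)
    (hL : L.PosSemidef)
    (hker : ∀ x : Fin n → ℝ, L *ᵥ x = 0 ↔ ∃ t : ℝ, x = t • (1 : Fin n → ℝ))
    (ε : ℝ) (hε : 0 < ε)
    (heig : ∀ μ : ℝ, (∃ v : Fin n → ℝ, v ≠ 0 ∧ L *ᵥ v = μ • v) → ε * μ < 2)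
    (c : EuclideanSpace ℝ (Fin n)) (z : ℕ → EuclideanSpace ℝ (Fin n))
    (hz0 : (∑ i, z 0 i) = 1)
    (hiter : ∀ k i, z (k + 1) i =
      (((1 : Matrix (Fin n) (Fin n) ℝ) - ε • L) *ᵥ (fun j => z k j)
        + ε • (L *ᵥ (fun j => c j))) i)
    (zstar : EuclideanSpace ℝ (Fin n))
    (hzstar : ∀ i, zstar i = c i + (1 - ∑ j, c j) / (n : ℝ)) :
    Tendsto z atTop (nhds zstar) ∧
    (∑ i, zstar i) = 1 ∧
    (∀ w : EuclideanSpace ℝ (Fin n), (∑ i, w i) = 1 → w ≠ zstar →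
      ‖zstar - c‖ < ‖w - c‖) := by
  rcases Nat.eq_zero_or_pos n with hn | hn
  · exfalso; subst hn; simp at hz0
  have hnR : (0:ℝ) < n := by exact_mod_cast hn
  set t : ℝ := (1 - ∑ j, c j) / (n : ℝ) with ht
  have hsum_zstar : (∑ i, zstar i) = 1 := by
    have h1 : (∑ i, zstar i) = (∑ i, c i) + n * t := by
      simp [hzstar, Finset.sum_add_distrib, ← ht, mul_comm]
    rw [h1, ht]; field_simp; ring
  have hL1 : L *ᵥ (1 : Fin n → ℝ) = 0 := (hker 1).mpr ⟨1, (one_smul _ _).symm⟩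
  refine ⟨?_, hsum_zstar, ?_⟩
  · -- convergence
    have hH : L.IsHermitian := hL.1
    set b := hH.eigenvectorBasis with hb
    set lam := hH.eigenvalues with hlam
    have hbev : ∀ i, L *ᵥ ⇑(b i) = lam i • ⇑(b i) := fun i => hH.mulVec_eigenvectorBasis i
    set y : ℕ → EuclideanSpace ℝ (Fin n) := fun k => z k - zstar with hy
    have hyk : ∀ k j, y k j = z k j - zstar j := fun k j => rfl
    have hy0sum : (∑ i, y 0 i) = 0 := by
      simp only [hyk, Finset.sum_sub_distrib, hz0, hsum_zstar, sub_self]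
    have hLz : L *ᵥ (fun j => zstar j) = L *ᵥ (fun j => c j) := by
      have h2 : (fun j => zstar j) = (fun j => c j) + t • (1 : Fin n → ℝ) := by
        funext j; simp [hzstar j, ← ht]
      rw [h2, mulVec_add, mulVec_smul, hL1, smul_zero, add_zero]
    have hMz : ∀ v : Fin n → ℝ, ((1 : Matrix (Fin n) (Fin n) ℝ) - ε • L) *ᵥ v
        = v - ε • (L *ᵥ v) := by
      intro v; rw [sub_mulVec, one_mulVec, smul_mulVec]
    have hyiter : ∀ k, (fun j => y (k+1) j)
        = ((1 : Matrix (Fin n) (Fin n) ℝ) - ε • L) *ᵥ (fun j => y k j) := by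
      intro k; funext j
      have h3 : (fun j => y k j) = (fun j => z k j) - (fun j => zstar j) := rfl
      rw [h3, mulVec_sub, hMz, hMz, hLz]
      have h4 := hiter k j
      rw [hMz] at h4
      simp only [hyk, h4, Pi.add_apply, Pi.sub_apply, Pi.smul_apply, smul_eq_mul]
      ring
    set a : ℕ → Fin n → ℝ := fun k i => (⇑(b i)) ⬝ᵥ (fun j => y k j) with ha
    have hMT : ((1 : Matrix (Fin n) (Fin n) ℝ) - ε • L)ᵀ
        = (1 : Matrix (Fin n) (Fin n) ℝ) - ε • L := by
      have hLT : Lᵀ = L := hH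
      rw [transpose_sub, transpose_one, transpose_smul, hLT]
    have hastep : ∀ k i, a (k+1) i = (1 - ε * lam i) * a k i := by
      intro k i
      have h5 : (⇑(b i)) ⬝ᵥ (((1 : Matrix (Fin n) (Fin n) ℝ) - ε • L) *ᵥ (fun j => y k j))
          = ((((1 : Matrix (Fin n) (Fin n) ℝ) - ε • L)) *ᵥ ⇑(b i)) ⬝ᵥ (fun j => y k j) := by
        rw [dotProduct_mulVec, ← mulVec_transpose, hMT]
      have h6 : (((1 : Matrix (Fin n) (Fin n) ℝ) - ε • L)) *ᵥ ⇑(b i)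
          = (1 - ε * lam i) • ⇑(b i) := by
        rw [hMz, hbev i, smul_smul, sub_smul, one_smul]
      calc a (k+1) i = (⇑(b i)) ⬝ᵥ (fun j => y (k+1) j) := rfl
        _ = (⇑(b i)) ⬝ᵥ (((1 : Matrix (Fin n) (Fin n) ℝ) - ε • L) *ᵥ (fun j => y k j)) := by
              rw [hyiter k]
        _ = ((1 - ε * lam i) • ⇑(b i)) ⬝ᵥ (fun j => y k j) := by rw [h5, h6]
        _ = (1 - ε * lam i) * a k i := by rw [smul_dotProduct]; rfl
    have hak : ∀ k i, a k i = (1 - ε * lam i)^k * a 0 i := by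
      intro k i
      induction k with
      | zero => simp
      | succ m ih => rw [hastep m i, ih, pow_succ]; ring
    have hterm : ∀ i, Tendsto (fun k => a k i • b i) atTop (nhds 0) := by
      intro i
      by_cases h0 : lam i = 0
      · have hbi0 : L *ᵥ ⇑(b i) = 0 := by rw [hbev i, h0, zero_smul]
        obtain ⟨s, hs⟩ := (hker _).mp hbi0
        have ha0 : a 0 i = 0 := by
          have : a 0 i = ∑ j, (⇑(b i)) j * y 0 j := rfl
          rw [this, hs]
          simp only [Pi.smul_apply, Pi.one_apply, smul_eq_mul, mul_one, ← Finset.mul_sum,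
            hy0sum, mul_zero]
        have : ∀ k, a k i • b i = 0 := by
          intro k; rw [hak k i, ha0, mul_zero, zero_smul]
        simp only [this]; exact tendsto_const_nhds
      · have hpos : 0 < lam i := lt_of_le_of_ne (hL.eigenvalues_nonneg i) (Ne.symm h0)
        have hne : (⇑(b i) : Fin n → ℝ) ≠ 0 := by
          intro hcon
          have := b.orthonormal.ne_zero i
          apply this
          ext j
          exact congrFun hcon j
        have hlt : ε * lam i < 2 := heig (lam i) ⟨⇑(b i), hne, hbev i⟩
        have habs : |1 - ε * lam i| < 1 := by
          rw [abs_lt]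
          constructor <;> nlinarith
        have hpow : Tendsto (fun k : ℕ => (1 - ε * lam i)^k) atTop (nhds 0) :=
          tendsto_pow_atTop_nhds_zero_of_abs_lt_one habs
        have := hpow.smul_const (a 0 i • b i)
        rw [zero_smul] at this
        refine this.congr fun k => ?_
        rw [hak k i, mul_smul]
    have hrepr : ∀ k, y k = ∑ i, a k i • b i := by
      intro k
      have h7 : ∀ i, b.repr (y k) i = a k i := by
        intro i
        rw [b.repr_apply_apply]
        simp only [PiLp.inner_apply, RCLike.inner_apply, conj_trivial]
        exact Finset.sum_congr rfl fun x _ => mul_comm _ _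
      conv_lhs => rw [← b.sum_repr (y k)]
      exact Finset.sum_congr rfl fun i _ => by rw [h7 i]
    have hytend : Tendsto y atTop (nhds 0) := by
      have hsum : Tendsto (fun k => ∑ i, a k i • b i) atTop (nhds (∑ _i : Fin n, (0 : EuclideanSpace ℝ (Fin n)))) :=
        tendsto_finset_sum _ (fun i _ => hterm i)
      rw [Finset.sum_const, smul_zero] at hsum
      exact hsum.congr fun k => (hrepr k).symm
    have := hytend.add_const zstar
    rw [zero_add] at this
    refine this.congr fun k => ?_
    simp [hy]
  · -- uniqueness of minimizer
    intro w hw hne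
    have hinner : inner (𝕜 := ℝ) (w - zstar) (zstar - c) = 0 := by
      have h8 : inner (𝕜 := ℝ) (w - zstar) (zstar - c)
          = ∑ i, (w i - zstar i) * (zstar i - c i) := by
        simp [PiLp.inner_apply]
        exact Finset.sum_congr rfl fun i _ => mul_comm _ _
      rw [h8]
      have h9 : ∀ i, (w i - zstar i) * (zstar i - c i) = (w i - zstar i) * t := by
        intro i; rw [hzstar i, ht]; ring_nf
      rw [Finset.sum_congr rfl fun i _ => h9 i, ← Finset.sum_mul, Finset.sum_sub_distrib,
        hw, hsum_zstar, sub_self, zero_mul]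
    have hpyth : ‖w - c‖^2 = ‖w - zstar‖^2 + ‖zstar - c‖^2 := by
      have h10 : w - c = (w - zstar) + (zstar - c) := (sub_add_sub_cancel w zstar c).symm
      rw [h10, norm_add_sq_real, hinner]
      ring
    have hwz : 0 < ‖w - zstar‖ := by
      rw [norm_pos_iff]
      exact sub_ne_zero_of_ne hne
    have hsq : ‖zstar - c‖^2 < ‖w - c‖^2 := by
      rw [hpyth]; nlinarith
    exact lt_of_pow_lt_pow_left₀ 2 (norm_nonneg _) hsq
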